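/- Data-processing from KL divergence to binary KL: let (Ω, F) be a measurable space with probability measures P_1 and P_2, and let Z : Ω → [0,1] be F-measurable. Then KL(P_1 ‖ P_2) ≥ kl(E_1[Z] ‖ E_2[Z]), where kl(p ‖ q) = p·log(p/q) + (1-p)·log((1-p)/(1-q)) is the KL divergence between Bernoulli(p) and Bernoulli(q). -/

import Mathlib

/-- Log-sum inequality. -/
lemma log_sum_ineq {Ω : Type*} [Fintype Ω] (f g : Ω → ℝ) (hf : ∀ ω, 0 ≤ f ω)
    (hg : ∀ ω, 0 ≤ g ω) (habs : ∀ ω, g ω = 0 → f ω = 0) :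
    (∑ ω : Ω, f ω) * Real.log ((∑ ω : Ω, f ω) / (∑ ω : Ω, g ω)) ≤
      ∑ ω : Ω, f ω * Real.log (f ω / g ω) := by
  set F := ∑ ω : Ω, f ω with hF
  set G := ∑ ω : Ω, g ω with hG
  by_cases hG0 : G = 0
  · have hgz : ∀ ω : Ω, g ω = 0 := by
      intro ω
      exact (Finset.sum_eq_zero_iff_of_nonneg (fun i _ => hg i)).mp hG0 ω (Finset.mem_univ ω)
    have hfz : ∀ ω : Ω, f ω = 0 := fun ω => habs ω (hgz ω)
    have hF0 : F = 0 := by simp [hF, hfz]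
    simp [hF0, hfz]
  · have hGpos : 0 < G := lt_of_le_of_ne (Finset.sum_nonneg fun i _ => hg i) (Ne.symm hG0)
    -- Jensen with φ(x) = x log x, weights g ω / G, points f ω / g ω
    have hw : ∀ i ∈ Finset.univ, (0:ℝ) ≤ g i / G := fun i _ => div_nonneg (hg i) hGpos.le
    have hw1 : ∑ i : Ω, g i / G = 1 := by
      rw [← Finset.sum_div, ← hG, div_self hG0]
    have hmem : ∀ i ∈ Finset.univ, f i / g i ∈ Set.Ici (0:ℝ) := fun i _ =>
      div_nonneg (hf i) (hg i)
    have hjen := Real.convexOn_mul_log.map_sum_le hw hw1 hmem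
    have hpt : ∑ i : Ω, (g i / G) • (f i / g i) = F / G := by
      rw [hF, Finset.sum_div]
      apply Finset.sum_congr rfl
      intro i _
      by_cases hgi : g i = 0
      · simp [hgi, habs i hgi]
      · rw [smul_eq_mul, div_mul_div_comm, mul_comm (g i) (f i), mul_div_mul_right _ _ hgi]
    rw [hpt] at hjen
    have key : F / G * Real.log (F / G) ≤ ∑ i : Ω, (g i / G) • (f i / g i * Real.log (f i / g i)) := hjen
    have := mul_le_mul_of_nonneg_left key hGpos.le
    calc F * Real.log (F / G) = G * (F / G * Real.log (F / G)) := by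
            field_simp
      _ ≤ G * ∑ i : Ω, (g i / G) • (f i / g i * Real.log (f i / g i)) := this
      _ = ∑ i : Ω, f i * Real.log (f i / g i) := by
            rw [Finset.mul_sum]
            apply Finset.sum_congr rfl
            intro i _
            by_cases hgi : g i = 0
            · simp [hgi, habs i hgi]
            · simp only [smul_eq_mul]
              field_simp

/-- data-processing from KL divergence to binary KL: for probability
measures `P₁, P₂` on a finite space with `P₁ ≪ P₂` and a `[0,1]`-valued random variable
`Z`, `kl(E₁[Z] ‖ E₂[Z]) ≤ KL(P₁ ‖ P₂)`. -/
theorem kl_data_processing_binary {Ω : Type*} [Fintype Ω] (P1 P2 : Ω → ℝ) (Z : Ω → ℝ)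
    (hP1 : ∀ ω, 0 ≤ P1 ω) (hP1sum : ∑ ω : Ω, P1 ω = 1)
    (hP2 : ∀ ω, 0 ≤ P2 ω) (hP2sum : ∑ ω : Ω, P2 ω = 1)
    (habs : ∀ ω, P2 ω = 0 → P1 ω = 0)
    (hZ : ∀ ω, Z ω ∈ Set.Icc (0 : ℝ) 1) :
    (∑ ω : Ω, P1 ω * Z ω) *
        Real.log ((∑ ω : Ω, P1 ω * Z ω) / (∑ ω : Ω, P2 ω * Z ω)) +
      (1 - ∑ ω : Ω, P1 ω * Z ω) *
        Real.log ((1 - ∑ ω : Ω, P1 ω * Z ω) / (1 - ∑ ω : Ω, P2 ω * Z ω)) ≤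
      ∑ ω : Ω, P1 ω * Real.log (P1 ω / P2 ω) := by
  have h1 : (∑ ω : Ω, P1 ω * Z ω) *
      Real.log ((∑ ω : Ω, P1 ω * Z ω) / (∑ ω : Ω, P2 ω * Z ω)) ≤
      ∑ ω : Ω, (P1 ω * Z ω) * Real.log ((P1 ω * Z ω) / (P2 ω * Z ω)) :=
    log_sum_ineq (fun ω => P1 ω * Z ω) (fun ω => P2 ω * Z ω)
      (fun ω => mul_nonneg (hP1 ω) (hZ ω).1)
      (fun ω => mul_nonneg (hP2 ω) (hZ ω).1)
      (fun ω h => by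
        rcases mul_eq_zero.mp h with h2 | h2
        · simp [habs ω h2]
        · simp [h2])
  have e1 : (1 - ∑ ω : Ω, P1 ω * Z ω) = ∑ ω : Ω, P1 ω * (1 - Z ω) := by
    simp only [mul_sub, mul_one, Finset.sum_sub_distrib, hP1sum]
  have e2 : (1 - ∑ ω : Ω, P2 ω * Z ω) = ∑ ω : Ω, P2 ω * (1 - Z ω) := by
    simp only [mul_sub, mul_one, Finset.sum_sub_distrib, hP2sum]
  have h2 : (1 - ∑ ω : Ω, P1 ω * Z ω) *
      Real.log ((1 - ∑ ω : Ω, P1 ω * Z ω) / (1 - ∑ ω : Ω, P2 ω * Z ω)) ≤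
      ∑ ω : Ω, (P1 ω * (1 - Z ω)) * Real.log ((P1 ω * (1 - Z ω)) / (P2 ω * (1 - Z ω))) := by
    rw [e1, e2]
    exact log_sum_ineq (fun ω => P1 ω * (1 - Z ω)) (fun ω => P2 ω * (1 - Z ω))
      (fun ω => mul_nonneg (hP1 ω) (by linarith [(hZ ω).2]))
      (fun ω => mul_nonneg (hP2 ω) (by linarith [(hZ ω).2]))
      (fun ω h => by
        rcases mul_eq_zero.mp h with h2 | h2
        · simp [habs ω h2]
        · simp [h2])
  have hsum : ∑ ω : Ω, ((P1 ω * Z ω) * Real.log ((P1 ω * Z ω) / (P2 ω * Z ω)) +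
      (P1 ω * (1 - Z ω)) * Real.log ((P1 ω * (1 - Z ω)) / (P2 ω * (1 - Z ω)))) =
      ∑ ω : Ω, P1 ω * Real.log (P1 ω / P2 ω) := by
    apply Finset.sum_congr rfl
    intro ω _
    by_cases hp1 : P1 ω = 0
    · simp [hp1]
    by_cases hz0 : Z ω = 0
    · simp [hz0]
    by_cases hz1 : Z ω = 1
    · simp [hz1]
    have hZne' : (1 : ℝ) - Z ω ≠ 0 := sub_ne_zero.mpr (Ne.symm hz1)
    rw [mul_div_mul_right _ _ hz0, mul_div_mul_right _ _ hZne']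
    ring
  calc _ ≤ ∑ ω : Ω, ((P1 ω * Z ω) * Real.log ((P1 ω * Z ω) / (P2 ω * Z ω)) +
        (P1 ω * (1 - Z ω)) * Real.log ((P1 ω * (1 - Z ω)) / (P2 ω * (1 - Z ω)))) := by
        rw [Finset.sum_add_distrib]; exact add_le_add h1 h2
    _ = _ := hsum
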